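/- Let f : [0, ∞) → ℝ be locally Lipschitz and let D ⊆ [0, ∞) be its set of points of differentiability. Suppose that for every ε > 0 there exist T_ε ≥ 0 and δ_ε > 0 such that every t ∈ D with t ≥ T_ε and f(t) ≥ ε satisfies f'(t) ≤ −δ_ε. Then limsup_{t → ∞} f(t) ≤ 0. -/

import Mathlib

open Set Filter MeasureTheory intervalIntegral Topology
open scoped ENNReal NNReal

/-- FTC-type inequality with Dini-slope hypothesis: if `g` is continuous on `[a,b]`,
`φ` is integrable on `[a,b]`, and at every `x ∈ [a,b)` the lower-right Dini derivative of `g`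
is at most `φ x`, then `g b - g a ≤ ∫ y in a..b, φ y`. -/
theorem sub_le_integral_of_slope_le {g φ : ℝ → ℝ} {a b : ℝ} (hab : a ≤ b)
    (hcont : ContinuousOn g (Icc a b)) (φint : IntegrableOn φ (Icc a b))
    (hφg : ∀ x ∈ Ico a b, ∀ r : ℝ, φ x < r → ∃ᶠ z in 𝓝[>] x, slope g x z < r) :
    g b - g a ≤ ∫ y in a..b, φ y := by
  refine le_of_forall_pos_le_add fun ε εpos => ?_
  rcases exists_lt_lowerSemicontinuous_integral_lt φ φint εpos with
    ⟨G', f_lt_G', G'cont, G'int, G'lt_top, hG'⟩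
  set s := {t | g t - g a ≤ ∫ u in a..t, (G' u).toReal} ∩ Icc a b
  have s_closed : IsClosed s := by
    have : ContinuousOn (fun t => (g t - g a, ∫ u in a..t, (G' u).toReal)) (Icc a b) := by
      rw [← uIcc_of_le hab] at G'int hcont ⊢
      exact (hcont.sub continuousOn_const).prodMk (continuousOn_primitive_interval G'int)
    simp only [s, inter_comm]
    exact this.preimage_isClosed_of_isClosed isClosed_Icc OrderClosedTopology.isClosed_le'
  have main : Icc a b ⊆ {t | g t - g a ≤ ∫ u in a..t, (G' u).toReal} := by
    refine s_closed.Icc_subset_of_forall_exists_gt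
      (by simp only [integral_same, mem_setOf_eq, sub_self, le_rfl]) fun t ht v t_lt_v => ?_
    obtain ⟨y, φ_lt_y', y_lt_G'⟩ : ∃ y : ℝ, (φ t : EReal) < y ∧ (y : EReal) < G' t :=
      EReal.lt_iff_exists_real_btwn.1 (f_lt_G' t)
    have I1 : ∀ᶠ u in 𝓝[>] t, (u - t) * y ≤ ∫ w in t..u, (G' w).toReal := by
      have B : ∀ᶠ u in 𝓝 t, (y : EReal) < G' u := G'cont.lowerSemicontinuousAt _ _ y_lt_G'
      rcases mem_nhds_iff_exists_Ioo_subset.1 B with ⟨m, M, ⟨hm, hM⟩, H⟩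
      have : Ioo t (min M b) ∈ 𝓝[>] t := Ioo_mem_nhdsGT (lt_min hM ht.right.right)
      filter_upwards [this] with u hu
      have I : Icc t u ⊆ Icc a b := Icc_subset_Icc ht.2.1 (hu.2.le.trans (min_le_right _ _))
      calc
        (u - t) * y = ∫ _ in Icc t u, y := by
          simp only [hu.left.le, MeasureTheory.integral_const, smul_eq_mul, sub_nonneg,
            MeasurableSet.univ, measureReal_restrict_apply_univ, Real.volume_real_Icc_of_le hu.left.le, Real.volume_Icc, Measure.restrict_apply, univ_inter,
            ENNReal.toReal_ofReal]
        _ ≤ ∫ w in t..u, (G' w).toReal := by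
          rw [intervalIntegral.integral_of_le hu.1.le, ← integral_Icc_eq_integral_Ioc]
          apply setIntegral_mono_ae_restrict
          · exact integrableOn_const measure_Icc_lt_top.ne
          · exact IntegrableOn.mono_set G'int I
          · have C1 : ∀ᵐ x : ℝ ∂volume.restrict (Icc t u), G' x < ⊤ :=
              ae_mono (Measure.restrict_mono I le_rfl) G'lt_top
            have C2 : ∀ᵐ x : ℝ ∂volume.restrict (Icc t u), x ∈ Icc t u :=
              ae_restrict_mem measurableSet_Icc
            filter_upwards [C1, C2] with x G'x hx
            apply EReal.coe_le_coe_iff.1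
            have : x ∈ Ioo m M := by
              simp only [hm.trans_le hx.left,
                (hx.right.trans_lt hu.right).trans_le (min_le_left M b), mem_Ioo, and_self_iff]
            refine (H this).out.le.trans_eq ?_
            exact (EReal.coe_toReal G'x.ne (f_lt_G' x).ne_bot).symm
    have I2 : ∃ᶠ u in 𝓝[>] t, g u - g t ≤ (u - t) * y := by
      have φ_lt_y : φ t < y := EReal.coe_lt_coe_iff.1 φ_lt_y'
      refine ((hφg t ht.2 y φ_lt_y).and_eventually self_mem_nhdsWithin).mono ?_
      rintro u ⟨hu, t_lt_u⟩
      have := mul_le_mul_of_nonneg_left hu.le (sub_pos.2 t_lt_u).le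
      rwa [← smul_eq_mul, sub_smul_slope] at this
    have I3 : ∃ᶠ u in 𝓝[>] t, g u - g t ≤ ∫ w in t..u, (G' w).toReal :=
      (I2.and_eventually I1).mono fun u ⟨hu2, hu1⟩ => hu2.trans hu1
    have I4 : ∀ᶠ u in 𝓝[>] t, u ∈ Ioc t (min v b) := by
      refine mem_nhdsGT_iff_exists_Ioc_subset.2 ⟨min v b, ?_, Subset.rfl⟩
      simp only [lt_min_iff, mem_Ioi]
      exact ⟨t_lt_v, ht.2.2⟩
    rcases (I3.and_eventually I4).exists with ⟨x, hx, h'x⟩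
    refine ⟨x, ?_, Ioc_subset_Ioc le_rfl (min_le_left _ _) h'x⟩
    calc
      g x - g a = g t - g a + (g x - g t) := by abel
      _ ≤ (∫ w in a..t, (G' w).toReal) + ∫ w in t..x, (G' w).toReal := add_le_add ht.1 hx
      _ = ∫ w in a..x, (G' w).toReal := by
        apply integral_add_adjacent_intervals
        · rw [intervalIntegrable_iff_integrableOn_Ioc_of_le ht.2.1]
          exact IntegrableOn.mono_set G'int
            (Ioc_subset_Icc_self.trans (Icc_subset_Icc le_rfl ht.2.2.le))
        · rw [intervalIntegrable_iff_integrableOn_Ioc_of_le h'x.1.le]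
          apply IntegrableOn.mono_set G'int
          exact Ioc_subset_Icc_self.trans (Icc_subset_Icc ht.2.1 (h'x.2.trans (min_le_right _ _)))
  calc
    g b - g a ≤ ∫ y in a..b, (G' y).toReal := main (right_mem_Icc.2 hab)
    _ ≤ (∫ y in a..b, φ y) + ε := by
      show (∫ y in a..b, (G' y).toReal) ≤ (∫ y in a..b, φ y) + ε
      convert (show (∫ x in Icc a b, (G' x).toReal) ≤ (∫ x in Icc a b, φ x) + ε from hG'.le) <;>
        · rw [intervalIntegral.integral_of_le hab]
          simp only [integral_Icc_eq_integral_Ioc', Real.volume_singleton]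


/-- Gluing Lipschitz estimates on adjacent intervals. -/
lemma lipschitzOnWith_Icc_glue {f : ℝ → ℝ} {K : ℝ≥0} {a c b : ℝ}
    (h1 : LipschitzOnWith K f (Icc a c)) (h2 : LipschitzOnWith K f (Icc c b)) :
    LipschitzOnWith K f (Icc a b) := by
  rcases le_or_gt c a with hca | hac
  · exact h2.mono (Icc_subset_Icc hca le_rfl)
  rcases le_or_gt b c with hbc | hcb
  · exact h1.mono (Icc_subset_Icc le_rfl hbc)
  rw [lipschitzOnWith_iff_dist_le_mul] at *
  have key : ∀ x ∈ Icc a b, ∀ y ∈ Icc a b, x ≤ y → dist (f x) (f y) ≤ K * dist x y := by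
    intro x hx y hy hxy
    rcases le_total y c with h | h
    · exact h1 x ⟨hx.1, hxy.trans h⟩ y ⟨hy.1, h⟩
    rcases le_total c x with h' | h'
    · exact h2 x ⟨h', hx.2⟩ y ⟨h, hy.2⟩
    calc dist (f x) (f y) ≤ dist (f x) (f c) + dist (f c) (f y) := dist_triangle _ _ _
      _ ≤ K * dist x c + K * dist c y :=
        add_le_add (h1 x ⟨hx.1, h'⟩ c ⟨hac.le, le_rfl⟩) (h2 c ⟨le_rfl, hcb.le⟩ y ⟨h, hy.2⟩)
      _ = K * dist x y := by
        rw [Real.dist_eq, Real.dist_eq, Real.dist_eq, ← mul_add,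
          abs_of_nonpos (by linarith), abs_of_nonpos (by linarith),
          abs_of_nonpos (by linarith)]
        ring
  intro x hx y hy
  rcases le_total x y with hxy | hxy
  · exact key x hx y hy hxy
  · rw [dist_comm x y, dist_comm (f x) (f y)]
    exact key y hy x hx hxy

/-- A locally Lipschitz function on `[0, ∞)` is Lipschitz on every compact subinterval. -/
lemma exists_lipschitzOnWith_Icc {f : ℝ → ℝ} (hf : LocallyLipschitzOn (Ici 0) f)
    {a b : ℝ} (ha : 0 ≤ a) : ∃ K : ℝ≥0, LipschitzOnWith K f (Icc a b) := by
  rcases lt_or_ge b a with hba | hab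
  · refine ⟨1, fun x hx y hy => ?_⟩
    exact absurd (hx.1.trans hx.2) (not_le.2 hba)
  -- local data at every point
  have loc : ∀ x : ℝ, ∃ (K : ℝ≥0) (r : ℝ), 0 < r ∧
      (x ∈ Icc a b → LipschitzOnWith K f (Metric.ball x r ∩ Ici 0)) := by
    intro x
    by_cases hx : x ∈ Icc a b
    · obtain ⟨K, t, ht, hK⟩ := hf (ha.trans hx.1)
      rw [mem_nhdsWithin] at ht
      obtain ⟨V, hVopen, hxV, hVt⟩ := ht
      obtain ⟨r, hr, hball⟩ := Metric.isOpen_iff.1 hVopen x hxV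
      exact ⟨K, r, hr, fun _ => hK.mono fun y hy => hVt ⟨hball hy.1, hy.2⟩⟩
    · exact ⟨1, 1, one_pos, fun h => absurd h hx⟩
  choose K r hr hK using loc
  -- finite subcover by half-balls
  obtain ⟨t, hts, htfin, htcov⟩ :=
    isCompact_Icc.elim_finite_subcover_image (ι := ℝ) (b := Icc a b)
      (c := fun x => Metric.ball x (r x / 2)) (fun i _ => Metric.isOpen_ball)
      (fun x hx => mem_iUnion₂.2 ⟨x, hx, Metric.mem_ball_self (by linarith [hr x])⟩)
  have htne : t.Nonempty := by
    rcases mem_iUnion₂.1 (htcov (left_mem_Icc.2 hab)) with ⟨i, hi, _⟩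
    exact ⟨i, hi⟩
  lift t to Finset ℝ using htfin
  obtain ⟨t₀, ht₀⟩ := htne
  set η : ℝ := t.inf' ⟨t₀, ht₀⟩ (fun x => r x / 2) with hη
  have hηpos : 0 < η := by
    rw [hη]
    apply Finset.lt_inf'_iff _ |>.2
    intro i _
    linarith [hr i]
  set Kmax : ℝ≥0 := t.sup K with hKmax
  -- Lipschitz on short interval
  have short : ∀ y ∈ Icc a b, LipschitzOnWith Kmax f (Icc y (min (y + η) b)) := by
    intro y hy
    rcases mem_iUnion₂.1 (htcov hy) with ⟨i, hi, hyball⟩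
    have hsub : Icc y (min (y + η) b) ⊆ Metric.ball i (r i) ∩ Ici 0 := by
      intro z hz
      have h1 : dist z i ≤ dist z y + dist y i := dist_triangle _ _ _
      have h2 : dist y i < r i / 2 := hyball
      have hzy : dist z y ≤ η := by
        rw [Real.dist_eq, abs_of_nonneg (by linarith [hz.1])]
        have := hz.2.trans (min_le_left _ _)
        linarith
      have hηri : η ≤ r i / 2 := Finset.inf'_le _ hi
      constructor
      · exact Metric.mem_ball.2 (by rw [Metric.mem_ball] at *; linarith)
      · exact le_trans (ha.trans hy.1) hz.1
    refine fun x hx y' hy' => le_trans (hK i (hts hi) (hsub hx) (hsub hy')) ?_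
    gcongr
    exact Finset.le_sup (Finset.mem_coe.1 hi)
  -- glue by induction
  have main : ∀ n : ℕ, LipschitzOnWith Kmax f (Icc a (min (a + n * η) b)) := by
    intro n
    induction n with
    | zero =>
      have e0 : min (a + (0 : ℕ) * η) b = a := by simp [hab]
      rw [e0]
      intro x hx y hy
      have hxy : x = y := le_antisymm (hx.2.trans hy.1) (hy.2.trans hx.1)
      simp [hxy]
    | succ n ih =>
      rcases le_or_gt b (a + n * η) with h | h
      · have e1 : min (a + (n : ℕ) * η) b = b := min_eq_right h
        have e2 : min (a + ((n + 1 : ℕ) : ℝ) * η) b = b :=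
          min_eq_right (by push_cast; nlinarith [hηpos.le])
        rw [e1] at ih
        rw [e2]
        exact ih
      · have e1 : min (a + (n : ℕ) * η) b = a + n * η := min_eq_left h.le
        rw [e1] at ih
        have hc : a + n * η ∈ Icc a b := ⟨by nlinarith [hηpos.le], h.le⟩
        have hglue := lipschitzOnWith_Icc_glue ih (short _ hc)
        have e2 : min (a + ((n + 1 : ℕ) : ℝ) * η) b = min (a + n * η + η) b := by
          push_cast; ring_nf
        rw [e2]
        exact hglue
  obtain ⟨n, hn⟩ := exists_nat_ge ((b - a) / η)
  have : b ≤ a + n * η := by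
    rw [div_le_iff₀ hηpos] at hn; linarith
  have hmain := main n
  rw [min_eq_right this] at hmain
  exact ⟨Kmax, hmain⟩


/-- Decay estimate: on an interval where `f ≥ ε`, the function decreases at rate `δ`. -/
lemma decay_aux {f : ℝ → ℝ} (hf : LocallyLipschitzOn (Ici 0) f)
    {T δ ε : ℝ} (hδ : 0 < δ)
    (hd : ∀ t : ℝ, 0 ≤ t → DifferentiableAt ℝ f t → T ≤ t → ε ≤ f t → deriv f t ≤ -δ)
    {a b : ℝ} (ha : 0 ≤ a) (hTa : T ≤ a) (hab : a ≤ b)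
    (hfε : ∀ t ∈ Icc a b, ε ≤ f t) :
    f b - f a ≤ -δ * (b - a) := by
  obtain ⟨K, hK⟩ := exists_lipschitzOnWith_Icc hf (le_refl (0 : ℝ)) (b := b + 1)
  obtain ⟨g, hg, hfg⟩ := hK.extend_real
  set N : Set ℝ := {x | ¬DifferentiableAt ℝ g x} ∪ {a} with hN
  have hNnull : volume N = 0 := by
    apply measure_union_null
    · exact ae_iff.1 (hg.ae_differentiableAt_of_real (μ := volume))
    · exact measure_singleton a
  refine le_of_forall_pos_le_add fun ε₂ hε₂ => ?_
  set c : ℝ := (K : ℝ) + 1 + δ with hc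
  have hcpos : 0 < c := by positivity
  obtain ⟨U, hNU, hUopen, hUlt⟩ := Set.exists_isOpen_lt_of_lt N (ENNReal.ofReal (ε₂ / c))
    (by rw [hNnull]; exact ENNReal.ofReal_pos.2 (by positivity))
  set φ : ℝ → ℝ := fun x => U.indicator (fun _ => c) x - δ with hφ
  have hIccsub : Icc a b ⊆ Icc 0 (b + 1) := Icc_subset_Icc ha (by linarith)
  have hUfin : (volume.restrict (Icc a b)) U < ⊤ := by
    rw [Measure.restrict_apply hUopen.measurableSet]
    exact lt_of_le_of_lt (le_trans (measure_mono inter_subset_left) hUlt.le)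
      ENNReal.ofReal_lt_top
  have hind_int : Integrable (U.indicator (fun _ => c)) (volume.restrict (Icc a b)) := by
    rw [integrable_indicator_iff hUopen.measurableSet]
    exact integrableOn_const hUfin.ne
  have hφint : IntegrableOn φ (Icc a b) :=
    hind_int.sub (integrableOn_const measure_Icc_lt_top.ne)
  have hcont : ContinuousOn f (Icc a b) := hK.continuousOn.mono hIccsub
  have hslope : ∀ x ∈ Ico a b, ∀ r : ℝ, φ x < r → ∃ᶠ z in 𝓝[>] x, slope f x z < r := by
    intro x hx r hr
    by_cases hxU : x ∈ U
    · have hφx : φ x = (K : ℝ) + 1 := by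
        simp only [hφ, indicator_of_mem hxU, hc]; ring
      have hev : ∀ᶠ z in 𝓝[>] x, z ∈ Ioc x b := Ioc_mem_nhdsGT hx.2
      refine (hev.mono fun z hz => ?_).frequently
      have hxs : x ∈ Icc (0 : ℝ) (b + 1) := hIccsub ⟨hx.1, hx.2.le⟩
      have hzs : z ∈ Icc (0 : ℝ) (b + 1) :=
        ⟨((ha.trans hx.1).trans hz.1.le), by linarith [hz.2]⟩
      have hd' : dist (f z) (f x) ≤ K * dist z x :=
        (lipschitzOnWith_iff_dist_le_mul.1 hK) z hzs x hxs
      have hzx : 0 < z - x := sub_pos.2 hz.1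
      rw [slope_def_field, div_lt_iff₀ hzx]
      have h2 : f z - f x ≤ K * (z - x) := by
        rw [Real.dist_eq, Real.dist_eq, abs_of_pos hzx] at hd'
        calc f z - f x ≤ |f z - f x| := le_abs_self _
          _ ≤ K * (z - x) := hd'
      have hKr : (K : ℝ) < r := by rw [hφx] at hr; linarith
      nlinarith
    · have hgd : DifferentiableAt ℝ g x := by
        by_contra hcon
        exact hxU (hNU (Or.inl hcon))
      have hax : a < x := by
        rcases hx.1.lt_or_eq with h | h
        · exact h
        · exact absurd (hNU (Or.inr (by rw [← h]; rfl))) hxU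
      have hnb : Ioo (0 : ℝ) (b + 1) ∈ 𝓝 x :=
        Ioo_mem_nhds (lt_of_le_of_lt ha hax) (lt_of_lt_of_le hx.2 (by linarith))
      have heq : f =ᶠ[𝓝 x] g := eventually_of_mem hnb fun y hy => hfg ⟨hy.1.le, hy.2.le⟩
      have hfd : DifferentiableAt ℝ f x := hgd.congr_of_eventuallyEq heq
      have hder : deriv f x ≤ -δ :=
        hd x (ha.trans hx.1) hfd (hTa.trans hx.1) (hfε x ⟨hx.1, hx.2.le⟩)
      have hφx : φ x = -δ := by simp [hφ, indicator_of_notMem hxU]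
      have hlt : deriv f x < r := lt_of_le_of_lt (hφx ▸ hder) hr
      exact ((hfd.hasDerivAt.hasDerivWithinAt (s := Ioi x)).limsup_slope_le'
        (notMem_Ioi.2 le_rfl) hlt).frequently
  have hFTC := sub_le_integral_of_slope_le hab hcont hφint hslope
  have hint : ∫ y in a..b, φ y ≤ ε₂ - δ * (b - a) := by
    rw [intervalIntegral.integral_of_le hab]
    have hsplit : ∫ y in Ioc a b, φ y =
        (∫ y in Ioc a b, U.indicator (fun _ => c) y) - ∫ _ in Ioc a b, δ := by
      rw [← integral_sub (hind_int.mono_measure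
        (Measure.restrict_mono Ioc_subset_Icc_self le_rfl))
        ((integrableOn_const measure_Ioc_lt_top.ne))]
    have h1 : ∫ y in Ioc a b, U.indicator (fun _ => c) y ≤ ε₂ := by
      rw [MeasureTheory.integral_indicator hUopen.measurableSet]
      rw [setIntegral_const]
      have hmeas : ((volume.restrict (Ioc a b)) U).toReal ≤ ε₂ / c := by
        have hle : (volume.restrict (Ioc a b)) U ≤ ENNReal.ofReal (ε₂ / c) := by
          rw [Measure.restrict_apply hUopen.measurableSet]
          exact le_trans (measure_mono inter_subset_left) hUlt.le
        calc ((volume.restrict (Ioc a b)) U).toReal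
            ≤ (ENNReal.ofReal (ε₂ / c)).toReal :=
              ENNReal.toReal_mono ENNReal.ofReal_ne_top hle
          _ = ε₂ / c := ENNReal.toReal_ofReal (by positivity)
      calc ((volume.restrict (Ioc a b)) U).toReal • c ≤ (ε₂ / c) * c := by
            rw [smul_eq_mul]
            exact mul_le_mul_of_nonneg_right hmeas hcpos.le
        _ = ε₂ := div_mul_cancel₀ _ hcpos.ne'
    have h2 : ∫ _ in Ioc a b, δ = δ * (b - a) := by
      rw [setIntegral_const, smul_eq_mul, Real.volume_real_Ioc_of_le hab]
      ring
    rw [hsplit, h2]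
    linarith
  linarith



/-- Barrier lemma: if `f` is locally Lipschitz on `[0, ∞)` and for every `ε > 0`
there are `T_ε ≥ 0`, `δ_ε > 0` such that at every point of differentiability
`t ≥ T_ε` with `f(t) ≥ ε` one has `f'(t) ≤ -δ_ε`, then `limsup_{t→∞} f(t) ≤ 0`. -/
theorem stmt_6 (f : ℝ → ℝ)
    (hf : LocallyLipschitzOn (Set.Ici (0 : ℝ)) f)
    (h : ∀ ε : ℝ, 0 < ε → ∃ T : ℝ, 0 ≤ T ∧ ∃ δ : ℝ, 0 < δ ∧
      ∀ t : ℝ, 0 ≤ t → DifferentiableAt ℝ f t → T ≤ t → ε ≤ f t →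
        deriv f t ≤ -δ) :
    Filter.limsup f Filter.atTop ≤ 0 := by
  have key : ∀ ε : ℝ, 0 < ε → ∀ᶠ t in atTop, f t ≤ ε := by
    intro ε hε
    obtain ⟨T, hT0, δ, hδ, hd⟩ := h ε hε
    rw [eventually_atTop]
    refine ⟨T + max (f T) 0 / δ + 1, fun b hb => ?_⟩
    by_contra hbf
    push_neg at hbf
    have hmd : 0 ≤ max (f T) 0 / δ := div_nonneg (le_max_right _ _) hδ.le
    have hTb : T ≤ b := by linarith
    set S := Icc T b ∩ f ⁻¹' Iic ε with hS
    have hcont : ContinuousOn f (Icc T b) :=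
      hf.continuousOn.mono fun x hx => hT0.trans hx.1
    have hSclosed : IsClosed S :=
      hcont.preimage_isClosed_of_isClosed isClosed_Icc isClosed_Iic
    have hSbdd : BddAbove S := ⟨b, fun x hx => hx.1.2⟩
    by_cases hSne : S.Nonempty
    · set a := sSup S with ha
      have haS : a ∈ S := hSclosed.csSup_mem hSne hSbdd
      have hab : a ≤ b := haS.1.2
      have hfa' : f a ≤ ε := haS.2
      have hab' : a < b := by
        rcases hab.lt_or_eq with h' | h'
        · exact h'
        · rw [h'] at hfa'; linarith
      have hmid : ∀ t ∈ Ioc a b, ε < f t := by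
        intro t ht
        by_contra hcon
        push_neg at hcon
        have htS : t ∈ S := ⟨⟨haS.1.1.trans ht.1.le, ht.2⟩, hcon⟩
        exact absurd (le_csSup hSbdd htS) (not_le.2 ht.1)
      have ha0 : (0 : ℝ) ≤ a := hT0.trans haS.1.1
      have hfa : ε ≤ f a := by
        have htend : Tendsto f (𝓝[>] a) (𝓝 (f a)) :=
          (hf.continuousOn a ha0).tendsto.mono_left
            (nhdsWithin_mono a fun x hx => ha0.trans (le_of_lt hx))
        refine ge_of_tendsto htend ?_
        filter_upwards [Ioc_mem_nhdsGT hab'] with z hz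
        exact (hmid z hz).le
      have hall : ∀ t ∈ Icc a b, ε ≤ f t := by
        intro t ht
        rcases ht.1.eq_or_lt with h' | h'
        · rwa [← h']
        · exact (hmid t ⟨h', ht.2⟩).le
      have hdec := decay_aux hf hδ hd ha0 haS.1.1 hab hall
      nlinarith
    · have hall : ∀ t ∈ Icc T b, ε ≤ f t := by
        intro t ht
        by_contra hcon
        push_neg at hcon
        exact hSne ⟨t, ht, hcon.le⟩
      have hdec := decay_aux hf hδ hd hT0 le_rfl hTb hall
      have hmd2 : δ * (max (f T) 0 / δ) = max (f T) 0 := by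
        field_simp
      have hmx : f T ≤ max (f T) 0 := le_max_left _ _
      nlinarith
  rw [Filter.limsup_eq]
  by_cases hbd : BddBelow {a | ∀ᶠ n in atTop, f n ≤ a}
  · refine le_of_forall_pos_le_add fun ε hε => ?_
    have := csInf_le hbd (key ε hε)
    linarith
  · rw [Real.sInf_of_not_bddBelow hbd]
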